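/- Let p be a prime, w a positive integer, and ω_p = e^{2πi/p}. Let S ⊆ F_{p^w} with |S| = s ≤ p^w − 1. Write s = s₁·p^{w−1} + s₂ with 0 ≤ s₁ ≤ p−1 and 0 ≤ s₂ ≤ p^{w−1}−1. Then |∑_{x∈S} ω_p^{Tr(x)}| ≤ |s₂·∑_{i=0}^{s₁} ω_p^i + (p^{w−1}−s₂)·∑_{i=0}^{s₁−1} ω_p^i| ≤ p^{w−1}·sin(πs/p^w)/sin(π/p), where Tr denotes the field trace from F_{p^w} to F_p. -/

import Mathlib

open Finset Classical

/-- ω_p = e^{2πi/p}. -/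
noncomputable def omg (p : ℕ) : ℂ := Complex.exp (2 * Real.pi * Complex.I / p)

/-- ω_p^{Tr(x)}, where Tr is the field trace from `K` (a field of cardinality `p^w`)
to `ZMod p`. -/
noncomputable def chr (p : ℕ) [Fact p.Prime] (K : Type*) [Field K] [Algebra (ZMod p) K]
    (x : K) : ℂ := omg p ^ (Algebra.trace (ZMod p) K x).val

lemma omg_eq (p : ℕ) : omg p = Complex.exp ((2 * Real.pi / p : ℝ) * Complex.I) := by
  unfold omg; push_cast; ring_nf

lemma omg_zpow (p : ℕ) (m : ℤ) :
    omg p ^ m = Complex.exp ((2 * Real.pi * m / p : ℝ) * Complex.I) := by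
  rw [omg_eq, ← Complex.exp_int_mul]; push_cast; ring_nf

lemma omg_pow (p : ℕ) (m : ℕ) :
    omg p ^ m = Complex.exp ((2 * Real.pi * m / p : ℝ) * Complex.I) := by
  have := omg_zpow p m
  rw [zpow_natCast] at this
  rw [this]; norm_num

lemma omg_ne_zero (p : ℕ) : omg p ≠ 0 := by
  rw [omg_eq]; exact Complex.exp_ne_zero _

lemma abs_omg_zpow (p : ℕ) (m : ℤ) : ‖omg p ^ m‖ = 1 := by
  rw [omg_zpow]; exact Complex.norm_exp_ofReal_mul_I _

lemma omg_pow_p (p : ℕ) (hp : 0 < p) : omg p ^ (p:ℤ) = 1 := by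
  rw [omg_zpow]
  have : (2 * Real.pi * (p:ℤ) / p : ℝ) = 2 * Real.pi := by
    push_cast; field_simp
  rw [this]
  push_cast
  exact Complex.exp_two_pi_mul_I

lemma omg_zpow_mod (p : ℕ) (hp : 0 < p) (m : ℤ) : omg p ^ (m % (p:ℤ)) = omg p ^ m := by
  conv_rhs => rw [show m = (p:ℤ) * (m / p) + m % p from (Int.mul_ediv_add_emod m p).symm]
  rw [zpow_add₀ (omg_ne_zero p), zpow_mul, omg_pow_p p hp, one_zpow, one_mul]

lemma omg_zpow_val (p : ℕ) [NeZero p] (m : ℤ) :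
    omg p ^ (((m : ZMod p).val : ℤ)) = omg p ^ m := by
  rw [ZMod.val_intCast, omg_zpow_mod p (Nat.pos_of_ne_zero (NeZero.ne p))]

lemma omg_conj (p : ℕ) (m : ℤ) :
    (starRingEnd ℂ) (omg p ^ m) = omg p ^ (-m) := by
  rw [omg_zpow, omg_zpow, ← Complex.exp_conj]
  congr 1
  simp only [map_mul, Complex.conj_I, Complex.conj_ofReal, map_ofNat]
  push_cast
  ring

lemma sum_zpow_Icc (x : ℂ) (hx : x ≠ 0) (lo : ℤ) (n : ℕ) :
    ∑ m ∈ Finset.Icc lo (lo + n - 1), x ^ m = x ^ lo * ∑ j ∈ Finset.range n, x ^ (j:ℤ) := by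
  induction n with
  | zero => simp
  | succ n ih =>
    have h1 : Finset.Icc lo (lo + (n+1:ℕ) - 1) = insert (lo + n) (Finset.Icc lo (lo + n - 1)) := by
      ext m
      simp only [Finset.mem_Icc, Finset.mem_insert]
      omega
    rw [h1, Finset.sum_insert (by simp only [Finset.mem_Icc]; omega),
      Finset.sum_range_succ, ih, mul_add, zpow_add₀ hx]
    push_cast
    ring

lemma conj_geom_sum (p : ℕ) (n : ℕ) :
    (starRingEnd ℂ) (∑ j ∈ Finset.range n, omg p ^ (j:ℤ))
      = omg p ^ (1 - (n:ℤ)) * ∑ j ∈ Finset.range n, omg p ^ (j:ℤ) := by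
  rw [map_sum]
  have h1 : ∀ j ∈ Finset.range n, (starRingEnd ℂ) (omg p ^ (j:ℤ))
      = omg p ^ (1 - (n:ℤ)) * omg p ^ ((n - 1 - j : ℕ) : ℤ) := by
    intro j hj
    rw [Finset.mem_range] at hj
    rw [omg_conj, ← zpow_add₀ (omg_ne_zero p)]
    congr 1
    omega
  rw [Finset.sum_congr rfl h1, ← Finset.mul_sum]
  congr 1
  exact (Finset.sum_range_reflect (fun j => omg p ^ (j:ℤ)) n)

lemma assemble (p M s₁ s₂ s : ℕ) (hsplit : s = s₁ * M + s₂)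
    (δ : ℝ) (t lo : ℤ) (ht : t ∈ Finset.Icc lo (lo + s₁))
    (hsub : Finset.Icc lo (lo + s₁) ⊆ Finset.Icc lo (lo + p - 1))
    (hcomp1 : ∀ n ∈ Finset.Icc lo (lo + s₁),
      (Complex.exp ((δ:ℝ) * Complex.I) * omg p ^ t).re
        ≤ (Complex.exp ((δ:ℝ) * Complex.I) * omg p ^ n).re)
    (hcomp2 : ∀ n ∈ Finset.Icc lo (lo + p - 1), n ∉ Finset.Icc lo (lo + s₁) →
      (Complex.exp ((δ:ℝ) * Complex.I) * omg p ^ n).re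
        ≤ (Complex.exp ((δ:ℝ) * Complex.I) * omg p ^ t).re)
    (aa : ℤ → ℕ) (haa : ∀ n, aa n ≤ M)
    (hsum : ∑ n ∈ Finset.Icc lo (lo + p - 1), aa n = s) :
    ∑ n ∈ Finset.Icc lo (lo + p - 1),
        (aa n : ℝ) * (Complex.exp ((δ:ℝ) * Complex.I) * omg p ^ n).re ≤
      ‖(M:ℂ) * ∑ n ∈ (Finset.Icc lo (lo + s₁)).erase t, omg p ^ n
        + (s₂:ℂ) * omg p ^ t‖ := by
  set c : ℤ → ℝ := fun n => (Complex.exp ((δ:ℝ) * Complex.I) * omg p ^ n).re with hc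
  set A : Finset ℤ := Finset.Icc lo (lo + s₁) with hA
  set W : Finset ℤ := Finset.Icc lo (lo + p - 1) with hW
  have hcardA : A.card = s₁ + 1 := by
    rw [hA, Int.card_Icc]
    omega
  have hcardE : (A.erase t).card = s₁ := by
    rw [Finset.card_erase_of_mem ht, hcardA]
    omega
  have hsubE : A.erase t ⊆ W := (Finset.erase_subset t A).trans hsub
  have hsumR : ∑ n ∈ W, (aa n : ℝ) = (s:ℝ) := by
    rw [← hsum]; push_cast; rfl
  have step1 : ∑ n ∈ W, (aa n : ℝ) * c n
      ≤ (s:ℝ) * c t + ∑ n ∈ A.erase t, (M:ℝ) * (c n - c t) := by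
    have hsplit2 : ∑ n ∈ W, (aa n : ℝ) * c n
        = (∑ n ∈ W, (aa n : ℝ)) * c t + ∑ n ∈ W, (aa n : ℝ) * (c n - c t) := by
      rw [Finset.sum_mul, ← Finset.sum_add_distrib]
      exact Finset.sum_congr rfl (fun n _ => by ring)
    rw [hsplit2, hsumR]
    gcongr ?_ + ?_
    · rfl
    rw [← Finset.sum_sdiff hsubE]
    have hzero : ∑ n ∈ W \ (A.erase t), (aa n : ℝ) * (c n - c t) ≤ 0 := by
      apply Finset.sum_nonpos
      intro n hn
      rw [Finset.mem_sdiff] at hn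
      have hct : c n ≤ c t := by
        by_cases hnA : n ∈ A
        · have : n = t := by
            by_contra hne
            exact hn.2 (Finset.mem_erase.mpr ⟨hne, hnA⟩)
          rw [this]
        · exact hcomp2 n hn.1 hnA
      apply mul_nonpos_of_nonneg_of_nonpos (by positivity)
      linarith
    have hbound : ∑ n ∈ A.erase t, (aa n : ℝ) * (c n - c t)
        ≤ ∑ n ∈ A.erase t, (M:ℝ) * (c n - c t) := by
      apply Finset.sum_le_sum
      intro n hn
      have h1 : c t ≤ c n := hcomp1 n (Finset.mem_of_mem_erase hn)
      have h2 : (aa n : ℝ) ≤ (M:ℝ) := by exact_mod_cast haa n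
      nlinarith
    linarith
  have step2 : (s:ℝ) * c t + ∑ n ∈ A.erase t, (M:ℝ) * (c n - c t)
      = (M:ℝ) * ∑ n ∈ A.erase t, c n + (s₂:ℝ) * c t := by
    rw [← Finset.mul_sum, Finset.sum_sub_distrib, Finset.sum_const, hcardE, hsplit]
    push_cast
    ring
  have step3 : (M:ℝ) * ∑ n ∈ A.erase t, c n + (s₂:ℝ) * c t
      = (Complex.exp ((δ:ℝ) * Complex.I) * ((M:ℂ) * ∑ n ∈ A.erase t, omg p ^ n
        + (s₂:ℂ) * omg p ^ t)).re := by
    have hexpand : Complex.exp ((δ:ℝ) * Complex.I) * ((M:ℂ) * ∑ n ∈ A.erase t, omg p ^ n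
        + (s₂:ℂ) * omg p ^ t)
        = (M:ℂ) * ∑ n ∈ A.erase t, (Complex.exp ((δ:ℝ) * Complex.I) * omg p ^ n)
          + (s₂:ℂ) * (Complex.exp ((δ:ℝ) * Complex.I) * omg p ^ t) := by
      rw [mul_add, Finset.mul_sum, Finset.mul_sum, Finset.mul_sum]
      exact congrArg₂ (· + ·) (Finset.sum_congr rfl fun n _ => by ring) (by ring)
    rw [hexpand]
    rw [Complex.add_re]
    have hMre : ((M:ℂ) * ∑ n ∈ A.erase t, (Complex.exp ((δ:ℝ) * Complex.I) * omg p ^ n)).re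
        = (M:ℝ) * ∑ n ∈ A.erase t, c n := by
      rw [show ((M:ℂ)) = ((M:ℝ):ℂ) by push_cast; rfl, Complex.re_ofReal_mul, Complex.re_sum]
    have hs₂re : ((s₂:ℂ) * (Complex.exp ((δ:ℝ) * Complex.I) * omg p ^ t)).re
        = (s₂:ℝ) * c t := by
      rw [show ((s₂:ℂ)) = ((s₂:ℝ):ℂ) by push_cast; rfl, Complex.re_ofReal_mul]
    rw [hMre, hs₂re]
  calc ∑ n ∈ W, (aa n : ℝ) * c n
      ≤ (s:ℝ) * c t + ∑ n ∈ A.erase t, (M:ℝ) * (c n - c t) := step1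
    _ = (M:ℝ) * ∑ n ∈ A.erase t, c n + (s₂:ℝ) * c t := step2
    _ = (Complex.exp ((δ:ℝ) * Complex.I) * ((M:ℂ) * ∑ n ∈ A.erase t, omg p ^ n
        + (s₂:ℂ) * omg p ^ t)).re := step3
    _ ≤ ‖Complex.exp ((δ:ℝ) * Complex.I) * ((M:ℂ) * ∑ n ∈ A.erase t, omg p ^ n
        + (s₂:ℂ) * omg p ^ t)‖ := Complex.re_le_norm _
    _ = ‖(M:ℂ) * ∑ n ∈ A.erase t, omg p ^ n + (s₂:ℂ) * omg p ^ t‖ := by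
        rw [norm_mul, Complex.norm_exp_ofReal_mul_I, one_mul]

lemma g_cos (p : ℕ) (δ : ℝ) (n : ℤ) :
    (Complex.exp ((δ:ℝ) * Complex.I) * omg p ^ n).re = Real.cos (δ + 2*Real.pi*n/p) := by
  rw [omg_zpow, ← Complex.exp_add,
    show (δ:ℂ) * Complex.I + ((2*Real.pi*n/p : ℝ):ℂ) * Complex.I
      = ((δ + 2*Real.pi*n/p : ℝ):ℂ) * Complex.I by push_cast; ring]
  exact Complex.exp_ofReal_mul_I_re _

lemma cos_window (k : ℕ) (β θ : ℝ) (hβ : 0 ≤ β) (hkπ : k * β ≤ Real.pi)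
    (h1 : k * β ≤ θ) (h2 : θ ≤ 2*Real.pi - k * β) :
    Real.cos θ ≤ Real.cos (k * β) := by
  by_cases hθ : θ ≤ Real.pi
  · exact Real.cos_le_cos_of_nonneg_of_le_pi (by positivity) hθ h1
  · rw [← Real.cos_two_pi_sub]
    exact Real.cos_le_cos_of_nonneg_of_le_pi (by positivity) (by linarith) (by linarith)

lemma comp_even (p ℓ : ℕ) (t : ℤ) (ht : t = -(ℓ:ℤ)) (hp : 2 ≤ p) (hℓ : 1 ≤ ℓ) (hk : 2*ℓ ≤ p)
    (δ : ℝ) (hδ0 : 0 ≤ δ) (hδβ : δ ≤ Real.pi/p) :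
    (∀ n : ℤ, -(ℓ:ℤ) ≤ n → n ≤ (ℓ:ℤ) - 1 →
      Real.cos (δ + 2*Real.pi*(t:ℝ)/p) ≤ Real.cos (δ + 2*Real.pi*n/p))
    ∧ (∀ n : ℤ, (ℓ:ℤ) ≤ n → n ≤ (p:ℤ) - 1 - ℓ →
      Real.cos (δ + 2*Real.pi*n/p) ≤ Real.cos (δ + 2*Real.pi*(t:ℝ)/p)) := by
  have htr : (t:ℝ) = -(ℓ:ℝ) := by rw [ht]; push_cast; ring
  rw [htr]
  have hp0 : (0:ℝ) < p := by positivity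
  set β : ℝ := Real.pi/p with hβ
  have hβ0 : 0 < β := by positivity
  have h2πn : ∀ n : ℤ, 2*Real.pi*n/p = 2*(n:ℝ)*β := by
    intro n; rw [hβ]; field_simp
  have hβp : (p:ℝ) * β = Real.pi := by rw [hβ]; field_simp
  have hℓβ : 2*(ℓ:ℝ)*β - δ ≤ Real.pi := by
    have : 2*(ℓ:ℝ) ≤ p := by exact_mod_cast hk
    nlinarith
  have htcos : Real.cos (δ + 2*Real.pi*(-(ℓ:ℝ))/p) = Real.cos (2*(ℓ:ℝ)*β - δ) := by
    rw [← Real.cos_neg (2*(ℓ:ℝ)*β - δ)]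
    congr 1
    rw [hβ]
    field_simp
    ring
  constructor
  · intro n hn1 hn2
    rw [htcos, h2πn]
    have hn2' : (n:ℝ) ≤ (ℓ:ℝ) - 1 := by exact_mod_cast hn2
    have hn1' : -(ℓ:ℝ) ≤ (n:ℝ) := by exact_mod_cast hn1
    rw [← Real.cos_abs (δ + 2*(n:ℝ)*β)]
    apply Real.cos_le_cos_of_nonneg_of_le_pi (abs_nonneg _) (by linarith)
    rw [abs_le]
    constructor <;> nlinarith
  · intro n hn1 hn2
    rw [htcos, h2πn]
    have hn1' : (ℓ:ℝ) ≤ (n:ℝ) := by exact_mod_cast hn1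
    have hn2' : (n:ℝ) ≤ (p:ℝ) - 1 - ℓ := by exact_mod_cast hn2
    have hkβ : ((2*ℓ:ℕ):ℝ) * β ≤ Real.pi := by push_cast; nlinarith
    have h1 : Real.cos (δ + 2*(n:ℝ)*β) ≤ Real.cos (((2*ℓ:ℕ):ℝ) * β) := by
      apply cos_window (2*ℓ) β _ hβ0.le hkβ
      · push_cast; nlinarith
      · push_cast; nlinarith
    have h2 : Real.cos (((2*ℓ:ℕ):ℝ) * β) ≤ Real.cos (2*(ℓ:ℝ)*β - δ) := by
      apply Real.cos_le_cos_of_nonneg_of_le_pi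
      · have : (1:ℝ) ≤ ℓ := by exact_mod_cast hℓ
        nlinarith
      · push_cast; nlinarith
      · push_cast; nlinarith
    linarith
  
lemma comp_odd (p ℓ : ℕ) (t : ℤ) (ht : t = (ℓ:ℤ)) (hp : 2 ≤ p) (hk : 2*ℓ+1 ≤ p)
    (δ : ℝ) (hδ0 : 0 ≤ δ) (hδβ : δ ≤ Real.pi/p) :
    (∀ n : ℤ, -(ℓ:ℤ) ≤ n → n ≤ (ℓ:ℤ) →
      Real.cos (δ + 2*Real.pi*(t:ℝ)/p) ≤ Real.cos (δ + 2*Real.pi*n/p))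
    ∧ (∀ n : ℤ, (ℓ:ℤ) + 1 ≤ n → n ≤ (p:ℤ) - 1 - ℓ →
      Real.cos (δ + 2*Real.pi*n/p) ≤ Real.cos (δ + 2*Real.pi*(t:ℝ)/p)) := by
  have htr : (t:ℝ) = (ℓ:ℝ) := by rw [ht]; push_cast; ring
  rw [htr]
  have hp0 : (0:ℝ) < p := by positivity
  set β : ℝ := Real.pi/p with hβ
  have hβ0 : 0 < β := by positivity
  have h2πn : ∀ n : ℤ, 2*Real.pi*n/p = 2*(n:ℝ)*β := by
    intro n; rw [hβ]; field_simp
  have hβp : (p:ℝ) * β = Real.pi := by rw [hβ]; field_simp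
  have h2πℓ : 2*Real.pi*(ℓ:ℝ)/p = 2*(ℓ:ℝ)*β := by rw [hβ]; field_simp
  have hkr : 2*(ℓ:ℝ)+1 ≤ p := by exact_mod_cast hk
  have htπ : δ + 2*(ℓ:ℝ)*β ≤ Real.pi := by nlinarith
  constructor
  · intro n hn1 hn2
    rw [h2πℓ, h2πn]
    have hn2' : (n:ℝ) ≤ (ℓ:ℝ) := by exact_mod_cast hn2
    have hn1' : -(ℓ:ℝ) ≤ (n:ℝ) := by exact_mod_cast hn1
    push_cast
    rw [← Real.cos_abs (δ + 2*(n:ℝ)*β)]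
    apply Real.cos_le_cos_of_nonneg_of_le_pi (abs_nonneg _) htπ
    rw [abs_le]
    constructor <;> nlinarith
  · intro n hn1 hn2
    rw [h2πℓ, h2πn]
    have hn1' : (ℓ:ℝ) + 1 ≤ (n:ℝ) := by exact_mod_cast hn1
    have hn2' : (n:ℝ) ≤ (p:ℝ) - 1 - ℓ := by exact_mod_cast hn2
    have hkβ : ((2*ℓ+1:ℕ):ℝ) * β ≤ Real.pi := by push_cast; nlinarith
    have h1 : Real.cos (δ + 2*(n:ℝ)*β) ≤ Real.cos (((2*ℓ+1:ℕ):ℝ) * β) := by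
      apply cos_window (2*ℓ+1) β _ hβ0.le hkβ
      · push_cast; nlinarith
      · push_cast; nlinarith
    have h2 : Real.cos (((2*ℓ+1:ℕ):ℝ) * β) ≤ Real.cos (δ + 2*(ℓ:ℝ)*β) := by
      apply Real.cos_le_cos_of_nonneg_of_le_pi
      · nlinarith
      · push_cast; nlinarith
      · push_cast; nlinarith
    push_cast at h1 h2 ⊢
    linarith

lemma sum_reindex {γ : Type*} [AddCommMonoid γ] (p : ℕ) [NeZero p] (k₀ lo : ℤ)
    (F : ZMod p → γ) :
    ∑ i : ZMod p, F i = ∑ n ∈ Finset.Icc lo (lo + p - 1), F (((n - k₀ : ℤ) : ZMod p)) := by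
  have hp0 : 0 < (p:ℤ) := by exact_mod_cast Nat.pos_of_ne_zero (NeZero.ne p)
  have hleft : ∀ z : ZMod p, ((lo + ((z.val : ℤ) + k₀ - lo) % p - k₀ : ℤ) : ZMod p) = z := by
    intro z
    push_cast
    rw [show ((lo:ZMod p) + ((z.val:ZMod p) + (k₀:ZMod p) - (lo:ZMod p)) - (k₀:ZMod p))
      = (z.val : ZMod p) from by ring, ZMod.natCast_val, ZMod.cast_id]
  apply Finset.sum_nbij' (i := fun z : ZMod p => lo + (((z.val : ℤ) + k₀ - lo) % p))
    (j := fun n : ℤ => ((n - k₀ : ℤ) : ZMod p))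
  · intro z _
    have h1 : 0 ≤ ((z.val : ℤ) + k₀ - lo) % p := Int.emod_nonneg _ (by omega)
    have h2 : ((z.val : ℤ) + k₀ - lo) % p < p := Int.emod_lt_of_pos _ hp0
    rw [Finset.mem_Icc]
    omega
  · intro n _
    exact Finset.mem_univ _
  · intro z _
    exact hleft z
  · intro n hn
    rw [Finset.mem_Icc] at hn
    have hval : (((n - k₀ : ℤ) : ZMod p).val : ℤ) = (n - k₀) % p := ZMod.val_intCast _
    rw [hval]
    have h1 : ((n - k₀) % p + k₀ - lo) % (p:ℤ) = (n - lo) % p := by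
      conv_rhs => rw [show n - lo = (n - k₀) + (k₀ - lo) from by ring]
      have := Int.emod_emod_of_dvd (n - k₀) (dvd_refl (p:ℤ))
      rw [show (n - k₀) % p + k₀ - lo = (n - k₀) % p + (k₀ - lo) from by ring]
      exact Int.ModEq.add_right _ this
    rw [h1, Int.emod_eq_of_lt (by omega) (by omega)]
    omega
  · intro z _
    rw [hleft z]

lemma core (p M s₁ s₂ s : ℕ) [NeZero p] (hp : 2 ≤ p) (hsplit : s = s₁ * M + s₂) (hs₁ : s₁ + 1 ≤ p)
    (φ δ : ℝ) (k₀ : ℤ) (hφ : φ = δ + 2*Real.pi*k₀/p) (hδ0 : 0 ≤ δ) (hδβ : δ ≤ Real.pi/p)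
    (a : ZMod p → ℕ) (ha : ∀ i, a i ≤ M) (hsum : ∑ i : ZMod p, a i = s) :
    ∑ i : ZMod p, (a i : ℝ) * (Complex.exp ((φ:ℝ) * Complex.I) * omg p ^ ((i.val : ℤ))).re
      ≤ ‖(M:ℂ) * ∑ j ∈ Finset.range s₁, omg p ^ (j:ℤ)
          + (s₂:ℂ) * omg p ^ ((s₁:ℕ):ℤ)‖ := by
  have hp0 : 0 < (p:ℤ) := by positivity
  -- conversion of summand
  have hterm : ∀ n : ℤ, (Complex.exp ((φ:ℝ) * Complex.I)
        * omg p ^ (((((n - k₀ : ℤ) : ZMod p)).val : ℤ))).re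
      = (Complex.exp ((δ:ℝ) * Complex.I) * omg p ^ n).re := by
    intro n
    rw [omg_zpow_val]
    have hexpφ : Complex.exp ((φ:ℝ) * Complex.I)
        = Complex.exp ((δ:ℝ) * Complex.I) * omg p ^ k₀ := by
      rw [omg_zpow, ← Complex.exp_add, hφ]
      congr 1
      push_cast
      ring
    rw [hexpφ, mul_assoc, ← zpow_add₀ (omg_ne_zero p)]
    congr 3
    ring
  -- even/odd split
  rcases Nat.even_or_odd (s₁ + 1) with he | ho
  · -- even case : s₁ + 1 = 2ℓ, lo = -ℓ, t = -ℓ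
    obtain ⟨ℓ, hℓ⟩ := he
    have hℓ1 : 1 ≤ ℓ := by omega
    have h2ℓ : 2*ℓ ≤ p := by omega
    set lo : ℤ := -(ℓ:ℤ) with hlo
    have hcomps := comp_even p ℓ lo hlo hp hℓ1 h2ℓ δ hδ0 hδβ
    have key := assemble p M s₁ s₂ s hsplit δ lo lo
      (by rw [Finset.mem_Icc]; omega)
      (by intro x hx; rw [Finset.mem_Icc] at *; omega)
      (by
        intro n hn
        rw [Finset.mem_Icc] at hn
        rw [g_cos, g_cos]
        exact hcomps.1 n (by omega) (by omega))
      (by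
        intro n hn hn2
        rw [Finset.mem_Icc] at hn
        rw [Finset.mem_Icc] at hn2
        push_neg at hn2
        rw [g_cos, g_cos]
        exact hcomps.2 n (by omega) (by omega))
      (fun n => a (((n - k₀ : ℤ) : ZMod p))) (fun n => ha _)
      (by rw [← sum_reindex p k₀ lo (fun i => a i)]; exact hsum)
    have hre : ∑ i : ZMod p, (a i : ℝ)
          * (Complex.exp ((φ:ℝ) * Complex.I) * omg p ^ ((i.val : ℤ))).re
        = ∑ n ∈ Finset.Icc lo (lo + p - 1), ((a (((n - k₀ : ℤ) : ZMod p)) : ℝ)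
          * (Complex.exp ((δ:ℝ) * Complex.I) * omg p ^ n).re) := by
      rw [sum_reindex p k₀ lo (fun i => (a i : ℝ)
        * (Complex.exp ((φ:ℝ) * Complex.I) * omg p ^ ((i.val : ℤ))).re)]
      exact Finset.sum_congr rfl (fun n _ => by rw [hterm n])
    rw [hre]
    refine key.trans (le_of_eq ?_)
    -- compute the absolute value for the even case
    have herase : (Finset.Icc lo (lo + (s₁:ℤ))).erase lo = Finset.Icc (lo+1) (lo + (s₁:ℤ)) := by
      ext m
      simp only [Finset.mem_erase, Finset.mem_Icc]
      omega
    have hIcc : Finset.Icc (lo+1) (lo + (s₁:ℤ)) = Finset.Icc (lo+1) ((lo+1) + (s₁:ℕ) - 1) := by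
      congr 1
      omega
    rw [herase, hIcc, sum_zpow_Icc _ (omg_ne_zero p)]
    -- now |M * ζ^(lo+1) * D + s₂ * ζ^lo| = |M * D + s₂ ζ^{s₁}|
    set D : ℂ := ∑ j ∈ Finset.range s₁, omg p ^ (j:ℤ) with hD
    have hfact : (M:ℂ) * (omg p ^ (lo+1) * D) + (s₂:ℂ) * omg p ^ lo
        = omg p ^ lo * ((M:ℂ) * (omg p * D) + (s₂:ℂ)) := by
      rw [zpow_add₀ (omg_ne_zero p), zpow_one]
      ring
    rw [hfact, norm_mul, abs_omg_zpow, one_mul]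
    -- conjugation trick
    have hconj : (starRingEnd ℂ) ((M:ℂ) * (omg p * D) + (s₂:ℂ))
        = omg p ^ (-(s₁:ℤ)) * ((M:ℂ) * D + (s₂:ℂ) * omg p ^ ((s₁:ℕ):ℤ)) := by
      rw [map_add, map_mul, map_mul, conj_geom_sum, map_natCast, map_natCast]
      rw [show (starRingEnd ℂ) (omg p) = omg p ^ (-1:ℤ) from by
        rw [← zpow_one (omg p), omg_conj]; norm_num]
      have h1 : omg p ^ (-1:ℤ) * omg p ^ (1 - (s₁:ℤ)) = omg p ^ (-(s₁:ℤ)) := by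
        rw [← zpow_add₀ (omg_ne_zero p)]; ring_nf
      have h2 : omg p ^ (-(s₁:ℤ)) * omg p ^ ((s₁:ℕ):ℤ) = 1 := by
        rw [← zpow_add₀ (omg_ne_zero p)]; simp
      linear_combination ((M:ℂ) * D) * h1 - (s₂:ℂ) * h2
    calc ‖(M:ℂ) * (omg p * D) + (s₂:ℂ)‖
        = ‖(starRingEnd ℂ) ((M:ℂ) * (omg p * D) + (s₂:ℂ))‖ :=
          (Complex.norm_conj _).symm
      _ = ‖(M:ℂ) * D + (s₂:ℂ) * omg p ^ ((s₁:ℕ):ℤ)‖ := by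
          rw [hconj, norm_mul, abs_omg_zpow, one_mul]
  · -- odd case : s₁ + 1 = 2ℓ+1, lo = -ℓ, t = ℓ
    obtain ⟨ℓ, hℓ⟩ := ho
    have h2ℓ : 2*ℓ+1 ≤ p := by omega
    set lo : ℤ := -(ℓ:ℤ) with hlo
    have hcomps := comp_odd p ℓ (ℓ:ℤ) rfl hp h2ℓ δ hδ0 hδβ
    have key := assemble p M s₁ s₂ s hsplit δ (ℓ:ℤ) lo
      (by rw [Finset.mem_Icc]; omega)
      (by intro x hx; rw [Finset.mem_Icc] at *; omega)
      (by
        intro n hn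
        rw [Finset.mem_Icc] at hn
        rw [g_cos, g_cos]
        exact hcomps.1 n (by omega) (by omega))
      (by
        intro n hn hn2
        rw [Finset.mem_Icc] at hn
        rw [Finset.mem_Icc] at hn2
        push_neg at hn2
        rw [g_cos, g_cos]
        exact hcomps.2 n (by omega) (by omega))
      (fun n => a (((n - k₀ : ℤ) : ZMod p))) (fun n => ha _)
      (by rw [← sum_reindex p k₀ lo (fun i => a i)]; exact hsum)
    have hre : ∑ i : ZMod p, (a i : ℝ)
          * (Complex.exp ((φ:ℝ) * Complex.I) * omg p ^ ((i.val : ℤ))).re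
        = ∑ n ∈ Finset.Icc lo (lo + p - 1), ((a (((n - k₀ : ℤ) : ZMod p)) : ℝ)
          * (Complex.exp ((δ:ℝ) * Complex.I) * omg p ^ n).re) := by
      rw [sum_reindex p k₀ lo (fun i => (a i : ℝ)
        * (Complex.exp ((φ:ℝ) * Complex.I) * omg p ^ ((i.val : ℤ))).re)]
      exact Finset.sum_congr rfl (fun n _ => by rw [hterm n])
    rw [hre]
    refine key.trans (le_of_eq ?_)
    have hteq : (ℓ:ℤ) = lo + (s₁:ℤ) := by omega
    have herase : (Finset.Icc lo (lo + (s₁:ℤ))).erase (ℓ:ℤ)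
        = Finset.Icc lo (lo + (s₁:ℕ) - 1) := by
      ext m
      simp only [Finset.mem_erase, Finset.mem_Icc]
      omega
    rw [herase, sum_zpow_Icc _ (omg_ne_zero p)]
    set D : ℂ := ∑ j ∈ Finset.range s₁, omg p ^ (j:ℤ) with hD
    have hfact : (M:ℂ) * (omg p ^ lo * D) + (s₂:ℂ) * omg p ^ (ℓ:ℤ)
        = omg p ^ lo * ((M:ℂ) * D + (s₂:ℂ) * omg p ^ ((s₁:ℕ):ℤ)) := by
      rw [show ((ℓ:ℤ)) = lo + (s₁:ℤ) from hteq, zpow_add₀ (omg_ne_zero p)]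
      ring
    rw [hfact, norm_mul, abs_omg_zpow, one_mul]

lemma main1 (p M s₁ s₂ s : ℕ) [NeZero p] (hp : 2 ≤ p) (hsplit : s = s₁*M+s₂) (hs₁ : s₁+1 ≤ p)
    (a : ZMod p → ℕ) (ha : ∀ i, a i ≤ M) (hsum : ∑ i : ZMod p, a i = s) :
    ‖∑ i : ZMod p, (a i : ℂ) * omg p ^ (i.val)‖
      ≤ ‖(M:ℂ) * ∑ j ∈ Finset.range s₁, omg p ^ (j:ℤ)
          + (s₂:ℂ) * omg p ^ ((s₁:ℕ):ℤ)‖ := by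
  have hp0 : (0:ℝ) < p := by positivity
  set z : ℂ := ∑ i : ZMod p, (a i : ℂ) * omg p ^ (i.val) with hz
  by_cases hz0 : z = 0
  · rw [hz0, norm_zero]
    exact norm_nonneg _
  -- get unit u = conj z / |z| and φ
  have habsz : (0:ℝ) < ‖z‖ := by
    simp [norm_pos_iff, hz0]
  have habs1 : ‖(starRingEnd ℂ) z / ((‖z‖ : ℝ) : ℂ)‖ = 1 := by
    rw [norm_div, Complex.norm_conj, Complex.norm_real, Real.norm_eq_abs, abs_of_pos habsz, div_self habsz.ne']
  obtain ⟨φ, hφu⟩ := (Complex.norm_eq_one_iff _).mp habs1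
  have hkey : Complex.exp ((φ:ℝ) * Complex.I) * z = ((‖z‖ : ℝ) : ℂ) := by
    have h0 : (starRingEnd ℂ) z / ((‖z‖ : ℝ) : ℂ) * z
        = z * (starRingEnd ℂ) z / ((‖z‖ : ℝ) : ℂ) := by ring
    rw [hφu, h0, Complex.mul_conj, ← Complex.sq_norm,
      show ((‖z‖ ^ 2 : ℝ) : ℂ) = ((‖z‖ : ℝ) : ℂ)^2 from by push_cast; rfl,
      sq, mul_div_assoc,
      div_self (show ((‖z‖ : ℝ) : ℂ) ≠ 0 from by exact_mod_cast habsz.ne'), mul_one]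
  have hre : ‖z‖
      = ∑ i : ZMod p, (a i : ℝ) * (Complex.exp ((φ:ℝ) * Complex.I) * omg p ^ ((i.val : ℤ))).re := by
    have h1 : Complex.exp ((φ:ℝ) * Complex.I) * z
        = ∑ i : ZMod p, (a i : ℂ) * (Complex.exp ((φ:ℝ) * Complex.I) * omg p ^ ((i.val : ℤ))) := by
      rw [hz, Finset.mul_sum]
      exact Finset.sum_congr rfl (fun i _ => by rw [zpow_natCast]; ring)
    have h2 := congrArg Complex.re h1
    rw [hkey] at h2
    rw [Complex.ofReal_re] at h2
    rw [h2, Complex.re_sum]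
    exact Finset.sum_congr rfl (fun i _ => by
      rw [show ((a i : ℕ):ℂ) = (((a i : ℕ):ℝ):ℂ) from by push_cast; rfl, Complex.re_ofReal_mul])
  rw [hre]
  -- choose k₀ and δ
  set β : ℝ := Real.pi / p with hβ
  have hβ0 : 0 < β := by positivity
  set k₀ : ℤ := round (φ / (2*β)) with hk₀
  have hround : |φ / (2*β) - k₀| ≤ 1/2 := abs_sub_round _
  set δ : ℝ := φ - 2*β*k₀ with hδ
  have hδabs : |δ| ≤ β := by
    rw [abs_le] at hround ⊢
    have h1 : δ = (φ / (2*β) - k₀) * (2*β) := by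
      rw [hδ]; field_simp
    constructor <;> (rw [h1]; nlinarith [hround.1, hround.2])
  rcases le_or_gt 0 δ with hδ0 | hδ0
  · -- δ ≥ 0 : direct
    apply core p M s₁ s₂ s hp hsplit hs₁ φ δ k₀ _ hδ0 _ a ha hsum
    · first
      | (rw [hδ, hβ]; field_simp; ring)
      | (rw [hδ, hβ]; field_simp)
    · have := (abs_le.mp hδabs).2; linarith [this]
  · -- δ < 0 : conjugate
    have hterm : ∀ i : ZMod p,
        (Complex.exp ((φ:ℝ) * Complex.I) * omg p ^ (((-i).val : ℤ))).re
          = (Complex.exp ((-φ:ℝ) * Complex.I) * omg p ^ ((i.val : ℤ))).re := by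
      intro i
      have hconj : (starRingEnd ℂ) (Complex.exp ((φ:ℝ) * Complex.I) * omg p ^ (((-i).val : ℤ)))
          = Complex.exp ((-φ:ℝ) * Complex.I) * omg p ^ ((i.val : ℤ)) := by
        rw [map_mul, omg_conj, ← Complex.exp_conj]
        congr 1
        · congr 1
          rw [map_mul, Complex.conj_I, Complex.conj_ofReal]
          push_cast
          ring
        · rw [← omg_zpow_val p (-(((-i).val : ℕ) : ℤ))]
          congr 2
          have : ((-(((-i).val : ℕ) : ℤ) : ℤ) : ZMod p) = i := by
            simp [ZMod.natCast_val, ZMod.cast_id]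
          rw [this]
      rw [← hconj, Complex.conj_re]
    have hflip : ∑ i : ZMod p, (a i : ℝ) * (Complex.exp ((φ:ℝ) * Complex.I) * omg p ^ ((i.val : ℤ))).re
        = ∑ i : ZMod p, (a (-i) : ℝ) * (Complex.exp ((-φ:ℝ) * Complex.I) * omg p ^ ((i.val : ℤ))).re := by
      rw [← Equiv.sum_comp (Equiv.neg (ZMod p))
        (fun i => (a i : ℝ) * (Complex.exp ((φ:ℝ) * Complex.I) * omg p ^ ((i.val : ℤ))).re)]
      exact Finset.sum_congr rfl (fun i _ => by
        simp only [Equiv.neg_apply]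
        rw [hterm i])
    rw [hflip]
    apply core p M s₁ s₂ s hp hsplit hs₁ (-φ) (-δ) (-k₀) _ (by linarith) _ (fun i => a (-i))
      (fun i => ha _) _
    · first
      | (rw [hδ, hβ]; push_cast; field_simp; ring)
      | (rw [hδ, hβ]; push_cast; field_simp)
      | (rw [hδ, hβ]; field_simp; ring)
    · have := (abs_le.mp hδabs).1; linarith [this]
    · rw [← Equiv.sum_comp (Equiv.neg (ZMod p)) (fun i => a i)] at hsum
      simpa using hsum

lemma exp_mul_I_sub_one (θ : ℝ) :
    Complex.exp ((2*θ : ℝ) * Complex.I) - 1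
      = 2 * Complex.I * (Real.sin θ : ℂ) * Complex.exp ((θ:ℝ) * Complex.I) := by
  have hE : Complex.exp (-(θ:ℂ) * Complex.I) * Complex.exp ((θ:ℂ) * Complex.I) = 1 := by
    rw [← Complex.exp_add]; ring_nf; exact Complex.exp_zero
  have h2 : Complex.I ^ 2 = -1 := Complex.I_sq
  have hsplit : ((2*θ : ℝ) : ℂ) * Complex.I = (θ:ℂ) * Complex.I + (θ:ℂ) * Complex.I := by
    push_cast; ring
  rw [Complex.ofReal_sin, Complex.sin, hsplit, Complex.exp_add]
  linear_combination hE - ((Complex.exp (-(θ:ℂ)*Complex.I) - Complex.exp ((θ:ℂ)*Complex.I)) * Complex.exp ((θ:ℂ)*Complex.I)) * h2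

lemma abs_exp_two_sub_one (θ : ℝ) (h0 : 0 ≤ θ) (hπ : θ ≤ Real.pi) :
    ‖Complex.exp ((2*θ : ℝ) * Complex.I) - 1‖ = 2 * Real.sin θ := by
  rw [exp_mul_I_sub_one, norm_mul, norm_mul, norm_mul]
  rw [Complex.norm_exp_ofReal_mul_I, Complex.norm_real, Real.norm_eq_abs, Complex.norm_I,
    abs_of_nonneg (Real.sin_nonneg_of_nonneg_of_le_pi h0 hπ)]
  simp

lemma part2 (p M s₁ s₂ : ℕ) (hp : 2 ≤ p) (hM : 1 ≤ M) (hs₁ : s₁ ≤ p - 1) (hs₂ : s₂ ≤ M) :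
    ‖(s₂ : ℂ) * ∑ i ∈ Finset.range (s₁ + 1), omg p ^ i
        + ((M - s₂ : ℕ) : ℂ) * ∑ i ∈ Finset.range s₁, omg p ^ i‖ ≤
      (M:ℝ) * Real.sin (Real.pi * ((s₁ * M + s₂ : ℕ) : ℝ) / ((p:ℝ) * M)) / Real.sin (Real.pi / p) := by
  have hp0 : (0:ℝ) < p := by positivity
  have hM0 : (0:ℝ) < M := by exact_mod_cast hM
  have hs₁p : (s₁ : ℝ) + 1 ≤ p := by
    have : s₁ + 1 ≤ p := by omega
    exact_mod_cast this
  have hβpos : 0 < Real.sin (Real.pi / p) := by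
    apply Real.sin_pos_of_pos_of_lt_pi
    · positivity
    · calc Real.pi / p ≤ Real.pi / 2 := by
            apply div_le_div_of_nonneg_left Real.pi_pos.le (by norm_num) (by exact_mod_cast hp)
        _ < Real.pi := by linarith [Real.pi_pos]
  set x : ℝ := s₁ * Real.pi / p with hxdef
  set y : ℝ := (s₁+1) * Real.pi / p with hydef
  have hx0 : 0 ≤ x := by positivity
  have hy0 : 0 ≤ y := by positivity
  have hyπ : y ≤ Real.pi := by
    rw [hydef, div_le_iff₀ hp0]
    nlinarith [Real.pi_pos]
  have hxπ : x ≤ Real.pi := by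
    rw [hxdef, div_le_iff₀ hp0]
    nlinarith [Real.pi_pos]
  have habs1 : ‖omg p ^ (s₁+1) - 1‖ = 2 * Real.sin y := by
    rw [omg_pow, show (2 * Real.pi * (s₁+1:ℕ) / p : ℝ) = 2 * y by rw [hydef]; push_cast; ring]
    exact abs_exp_two_sub_one y hy0 hyπ
  have habs0 : ‖omg p ^ s₁ - 1‖ = 2 * Real.sin x := by
    rw [omg_pow, show (2 * Real.pi * (s₁:ℕ) / p : ℝ) = 2 * x by rw [hxdef]; push_cast; ring]
    exact abs_exp_two_sub_one x hx0 hxπ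
  have habsβ : ‖omg p - 1‖ = 2 * Real.sin (Real.pi / p) := by
    have := abs_exp_two_sub_one (Real.pi / p) (by positivity)
      (by rw [div_le_iff₀ hp0]; nlinarith [Real.pi_pos])
    rw [show (2 * (Real.pi / p) : ℝ) = 2 * Real.pi / p by ring] at this
    rw [← this, omg_eq]
  set mid : ℂ := (s₂ : ℂ) * ∑ i ∈ Finset.range (s₁ + 1), omg p ^ i
        + ((M - s₂ : ℕ) : ℂ) * ∑ i ∈ Finset.range s₁, omg p ^ i with hmid
  have hmul : mid * (omg p - 1)
      = (s₂:ℂ) * (omg p^(s₁+1) - 1) + ((M-s₂:ℕ):ℂ) * (omg p^s₁ - 1) := by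
    rw [hmid, add_mul, mul_assoc, mul_assoc, geom_sum_mul, geom_sum_mul]
  -- concavity step
  set z : ℝ := Real.pi * ((s₁ * M + s₂ : ℕ) : ℝ) / ((p:ℝ) * M) with hzdef
  have hzconv : ((M:ℝ)-s₂)/M * x + (s₂:ℝ)/M * y = z := by
    rw [hxdef, hydef, hzdef]
    have hMne : (M:ℝ) ≠ 0 := ne_of_gt hM0
    push_cast
    field_simp
    ring
  have hconc : ((M:ℝ)-s₂) * Real.sin x + (s₂:ℝ) * Real.sin y ≤ M * Real.sin z := by
    have hs₂M : (s₂:ℝ) ≤ M := by exact_mod_cast hs₂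
    have h := strictConcaveOn_sin_Icc.concaveOn.2
      ⟨hx0, hxπ⟩ ⟨hy0, hyπ⟩
      (div_nonneg (show (0:ℝ) ≤ (M:ℝ) - s₂ by linarith) hM0.le)
      (by positivity : (0:ℝ) ≤ (s₂:ℝ)/M)
      (show ((M:ℝ)-(s₂:ℝ))/(M:ℝ) + (s₂:ℝ)/(M:ℝ) = 1 by field_simp; ring)

    simp only [smul_eq_mul] at h
    rw [hzconv] at h
    have := mul_le_mul_of_nonneg_left h hM0.le
    calc ((M:ℝ)-s₂) * Real.sin x + (s₂:ℝ) * Real.sin y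
        = M * (((M:ℝ)-s₂)/M * Real.sin x + (s₂:ℝ)/M * Real.sin y) := by
          field_simp
      _ ≤ M * Real.sin z := this
  have htri : ‖mid * (omg p - 1)‖ ≤ 2 * ((M:ℝ) * Real.sin z) := by
    rw [hmul]
    calc ‖(s₂:ℂ) * (omg p^(s₁+1) - 1) + ((M-s₂:ℕ):ℂ) * (omg p^s₁ - 1)‖
        ≤ ‖(s₂:ℂ) * (omg p^(s₁+1) - 1)‖
          + ‖((M-s₂:ℕ):ℂ) * (omg p^s₁ - 1)‖ := norm_add_le _ _
      _ = (s₂:ℝ) * (2 * Real.sin y) + ((M-s₂:ℕ):ℝ) * (2 * Real.sin x) := by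
          rw [norm_mul, norm_mul, habs1, habs0, Complex.norm_natCast, Complex.norm_natCast]
      _ = 2 * (((M:ℝ)-s₂) * Real.sin x + (s₂:ℝ) * Real.sin y) := by
          rw [Nat.cast_sub hs₂]; ring
      _ ≤ 2 * ((M:ℝ) * Real.sin z) := by linarith
  rw [norm_mul, habsβ] at htri
  rw [le_div_iff₀ hβpos]
  nlinarith

lemma fiber_card (p w : ℕ) [Fact p.Prime] (hw : 1 ≤ w)
    (K : Type) [Field K] [Fintype K] [Algebra (ZMod p) K]
    (hK : Fintype.card K = p ^ w) (i : ZMod p) :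
    (univ.filter fun x : K => Algebra.trace (ZMod p) K x = i).card = p ^ (w-1) := by
  haveI : Module.Finite (ZMod p) K := Module.Finite.of_finite
  have hsurj : Function.Surjective (Algebra.trace (ZMod p) K) :=
    Algebra.trace_surjective (ZMod p) K
  set tr := Algebra.trace (ZMod p) K with htr
  set F := fun j : ZMod p => univ.filter fun x : K => tr x = j with hF
  have hbij : ∀ j : ZMod p, (F j).card = (F i).card := by
    intro j
    obtain ⟨a, ha⟩ := hsurj (i - j)
    apply Finset.card_nbij' (fun x => x + a) (fun y => y - a)
    · intro x hx
      simp only [hF, Finset.mem_coe, Finset.mem_filter, Finset.mem_univ, true_and, map_add] at *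
      rw [hx, ha]; ring
    · intro y hy
      simp only [hF, Finset.mem_coe, Finset.mem_filter, Finset.mem_univ, true_and, map_sub] at *
      rw [hy, ha]; ring
    · intro x _; ring
    · intro y _; ring
  have hsum : ∑ j : ZMod p, (F j).card = p ^ w := by
    rw [← hK, ← Finset.card_univ,
      Finset.card_eq_sum_card_fiberwise (f := tr) (fun x _ => Finset.mem_univ _)]
  have hp : p.Prime := Fact.out
  have hcard : ∑ j : ZMod p, (F j).card = p * (F i).card := by
    rw [Finset.sum_congr rfl (fun j _ => hbij j), Finset.sum_const, Finset.card_univ,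
      ZMod.card, smul_eq_mul]
  rw [hcard] at hsum
  have hpw : p ^ w = p * p ^ (w-1) := by
    conv_lhs => rw [show w = 1 + (w-1) by omega]
    rw [pow_add, pow_one]
  rw [hpw] at hsum
  exact Nat.eq_of_mul_eq_mul_left hp.pos hsum


/-- bound on sums of `p`-th roots of unity indexed by traces. -/
theorem stmt0 (p w s s₁ s₂ : ℕ) [Fact p.Prime] (hw : 1 ≤ w)
    (K : Type) [Field K] [Fintype K] [Algebra (ZMod p) K]
    (hK : Fintype.card K = p ^ w)
    (S : Finset K) (hS : S.card = s)
    (hs : s ≤ p ^ w - 1) (hsplit : s = s₁ * p ^ (w - 1) + s₂)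
    (hs₁ : s₁ ≤ p - 1) (hs₂ : s₂ ≤ p ^ (w - 1) - 1) :
    ‖∑ x ∈ S, chr p K x‖ ≤
      ‖(s₂ : ℂ) * ∑ i ∈ Finset.range (s₁ + 1), omg p ^ i
        + ((p ^ (w - 1) - s₂ : ℕ) : ℂ) * ∑ i ∈ Finset.range s₁, omg p ^ i‖ ∧
    ‖(s₂ : ℂ) * ∑ i ∈ Finset.range (s₁ + 1), omg p ^ i
        + ((p ^ (w - 1) - s₂ : ℕ) : ℂ) * ∑ i ∈ Finset.range s₁, omg p ^ i‖ ≤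
      (p : ℝ) ^ (w - 1) * Real.sin (Real.pi * s / p ^ w) / Real.sin (Real.pi / p) := by
  have hprime : p.Prime := Fact.out
  have hp : 2 ≤ p := hprime.two_le
  haveI : NeZero p := ⟨hprime.ne_zero⟩
  set M : ℕ := p ^ (w - 1) with hM
  have hM1 : 1 ≤ M := Nat.one_le_pow _ _ (by omega)
  have hs₂M : s₂ ≤ M := by omega
  have hs₁p : s₁ + 1 ≤ p := by
    rcases Nat.eq_zero_or_pos s₁ with h | h
    · omega
    · omega
  -- rewrite the middle expression
  have hmid : (s₂ : ℂ) * ∑ i ∈ Finset.range (s₁ + 1), omg p ^ i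
        + ((M - s₂ : ℕ) : ℂ) * ∑ i ∈ Finset.range s₁, omg p ^ i
      = (M:ℂ) * ∑ j ∈ Finset.range s₁, omg p ^ (j:ℤ)
        + (s₂:ℂ) * omg p ^ ((s₁:ℕ):ℤ) := by
    have hz : ∀ n : ℕ, ∑ j ∈ Finset.range n, omg p ^ (j:ℤ) = ∑ j ∈ Finset.range n, omg p ^ j :=
      fun n => Finset.sum_congr rfl (fun j _ => zpow_natCast _ _)
    rw [hz, Finset.sum_range_succ, Nat.cast_sub hs₂M, zpow_natCast]
    push_cast
    ring
  constructor
  · -- first inequality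
    set a : ZMod p → ℕ :=
      fun i => (S.filter (fun x => Algebra.trace (ZMod p) K x = i)).card with ha
    have hsum_eq : ∑ x ∈ S, chr p K x = ∑ i : ZMod p, (a i : ℂ) * omg p ^ (i.val) := by
      rw [← Finset.sum_fiberwise S (fun x => Algebra.trace (ZMod p) K x) (fun x => chr p K x)]
      refine Finset.sum_congr rfl (fun i _ => ?_)
      have hcongr : ∀ x ∈ S.filter (fun x => Algebra.trace (ZMod p) K x = i),
          chr p K x = omg p ^ (i.val) := by
        intro x hx
        rw [Finset.mem_filter] at hx
        unfold chr
        rw [hx.2]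
      calc ∑ x ∈ S.filter (fun x => Algebra.trace (ZMod p) K x = i), chr p K x
          = ∑ _x ∈ S.filter (fun x => Algebra.trace (ZMod p) K x = i), omg p ^ (i.val) :=
            Finset.sum_congr rfl hcongr
        _ = (a i : ℂ) * omg p ^ (i.val) := by rw [Finset.sum_const, nsmul_eq_mul]
    have hbound : ∀ i, a i ≤ M := by
      intro i
      calc (S.filter (fun x => Algebra.trace (ZMod p) K x = i)).card
          ≤ (Finset.univ.filter (fun x : K => Algebra.trace (ZMod p) K x = i)).card :=
            Finset.card_le_card (Finset.filter_subset_filter _ (Finset.subset_univ S))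
        _ = M := fiber_card p w hw K hK i
    have hsum : ∑ i : ZMod p, a i = s := by
      rw [← hS]
      exact (Finset.card_eq_sum_card_fiberwise
        (fun x _ => Finset.mem_univ (Algebra.trace (ZMod p) K x))).symm
    rw [hsum_eq, hmid]
    exact main1 p M s₁ s₂ s hp hsplit hs₁p a hbound hsum
  · -- second inequality
    have h2 := part2 p M s₁ s₂ hp hM1 hs₁ hs₂M
    have harg : Real.pi * ((s₁ * M + s₂ : ℕ) : ℝ) / ((p:ℝ) * M) = Real.pi * s / (p:ℝ) ^ w := by
      have hpow : (p:ℝ) * ((M:ℕ):ℝ) = (p:ℝ)^w := by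
        rw [hM]
        push_cast
        rw [← pow_succ']
        congr 1
        omega
      rw [hsplit, hpow]
    rw [harg] at h2
    calc ‖_‖ ≤ (M:ℝ) * Real.sin (Real.pi * s / (p:ℝ)^w) / Real.sin (Real.pi / p) := h2
      _ = (p:ℝ) ^ (w-1) * Real.sin (Real.pi * s / (p:ℝ)^w) / Real.sin (Real.pi / p) := by
        rw [hM]; push_cast; ring
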